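/- Let A be a left brace. Then for every ordinal α the term A^α of the left series is a left ideal of A, and the term A^{(α)} of the right series is an ideal of A. -/

import Mathlib

/-- A left brace: `(A, +)` is an abelian group, `(A, *)` is a group, and
`a * (b + c) = a * b + a * c - a` for all `a b c`. -/
class LeftBrace (A : Type*) extends AddCommGroup A, Group A where
  mul_add_eq : ∀ a b c : A, a * (b + c) = a * b + a * c - a

namespace LeftBrace

variable {A : Type*} [LeftBrace A]

/-- The star operation of a left brace: `a ⋆ b = a * b - a - b`. -/
def star (a b : A) : A := a * b - a - b

/-- `K ⋆ L`: the subgroup of the additive group of `A` generated by all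
`x ⋆ y` with `x ∈ K`, `y ∈ L`. -/
def setStar (K L : Set A) : AddSubgroup A :=
  AddSubgroup.closure (Set.image2 star K L)

/-- A subbrace of `A`: a subset that is simultaneously a subgroup of the
additive group of `A` and a subgroup of the multiplicative group of `A`. -/
def IsSubbrace (S : Set A) : Prop :=
  (0 : A) ∈ S ∧ (∀ x ∈ S, ∀ y ∈ S, x + y ∈ S) ∧ (∀ x ∈ S, -x ∈ S) ∧
    (1 : A) ∈ S ∧ (∀ x ∈ S, ∀ y ∈ S, x * y ∈ S) ∧ (∀ x ∈ S, x⁻¹ ∈ S)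

/-- A left ideal of `A`: a subbrace `S` with `a ⋆ b ∈ S` for all `a ∈ A`, `b ∈ S`. -/
def IsLeftIdeal (S : Set A) : Prop :=
  IsSubbrace S ∧ ∀ a : A, ∀ b ∈ S, star a b ∈ S

/-- An ideal of `A`: a subbrace `S` with `a ⋆ z ∈ S` and `z ⋆ a ∈ S`
for all `a ∈ A`, `z ∈ S`. -/
def IsIdeal (S : Set A) : Prop :=
  IsSubbrace S ∧ ∀ a : A, ∀ z ∈ S, star a z ∈ S ∧ star z a ∈ S

/-- The left series of the brace `A`, with the indexing shifted by one:
`leftSeriesN A 0 = A¹ = A` and `leftSeriesN A n = Aⁿ⁺¹ = A ⋆ Aⁿ`.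
In particular `leftSeriesN A 1 = A²` and `leftSeriesN A 2 = A³`. -/
def leftSeriesN (A : Type*) [LeftBrace A] : ℕ → AddSubgroup A
  | 0 => ⊤
  | n + 1 => setStar Set.univ ((leftSeriesN A n : AddSubgroup A) : Set A)

/-- The right series of the brace `A`, with the indexing shifted by one:
`rightSeriesN A 0 = A⁽¹⁾ = A` and `rightSeriesN A n = A⁽ⁿ⁺¹⁾ = A⁽ⁿ⁾ ⋆ A`.
In particular `rightSeriesN A 2 = A⁽³⁾` and `rightSeriesN A 3 = A⁽⁴⁾`. -/
def rightSeriesN (A : Type*) [LeftBrace A] : ℕ → AddSubgroup A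
  | 0 => ⊤
  | n + 1 => setStar ((rightSeriesN A n : AddSubgroup A) : Set A) Set.univ

end LeftBrace

open LeftBrace

namespace LeftBrace

/-- The left series of `A` indexed by ordinals, with the indexing shifted by
one: `leftSeriesOrd A 0 = A¹ = A`, `leftSeriesOrd A (α + 1) = A ⋆ leftSeriesOrd A α`,
and at limit ordinals it is the intersection of the earlier terms. -/
noncomputable def leftSeriesOrd (A : Type*) [LeftBrace A] (o : Ordinal) :
    AddSubgroup A :=
  Ordinal.limitRecOn o ⊤
    (fun _ ih => setStar (Set.univ : Set A) (ih : Set A))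
    (fun o _ ih => ⨅ (μ : Ordinal) (h : μ < o), ih μ h)

/-- The right series of `A` indexed by ordinals, with the indexing shifted by
one: `rightSeriesOrd A 0 = A⁽¹⁾ = A`, `rightSeriesOrd A (α + 1) = (rightSeriesOrd A α) ⋆ A`,
and at limit ordinals it is the intersection of the earlier terms. -/
noncomputable def rightSeriesOrd (A : Type*) [LeftBrace A] (o : Ordinal) :
    AddSubgroup A :=
  Ordinal.limitRecOn o ⊤
    (fun _ ih => setStar (ih : Set A) (Set.univ : Set A))
    (fun o _ ih => ⨅ (μ : Ordinal) (h : μ < o), ih μ h)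

end LeftBrace


namespace LeftBrace

variable {A : Type*} [LeftBrace A]

lemma my_mul_zero (a : A) : a * 0 = a := by
  have h := mul_add_eq a 0 0
  rw [add_zero] at h
  have h2 : a * 0 + a = a * 0 + a * 0 := eq_sub_iff_add_eq.mp h
  exact (add_left_cancel h2).symm

lemma one_eq_zero : (1 : A) = 0 := by
  have h := my_mul_zero (1 : A)
  rw [one_mul] at h
  exact h.symm

/-- The lambda map of a left brace. -/
def lam (a b : A) : A := a * b - a

lemma lam_add (a b c : A) : lam a (b + c) = lam a b + lam a c := by
  unfold lam; rw [mul_add_eq]; abel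

/-- `lam a` as an additive homomorphism. -/
def lamHom (a : A) : A →+ A := AddMonoidHom.mk' (lam a) (lam_add a)

lemma lam_zero (a : A) : lam a 0 = 0 := (lamHom a).map_zero

lemma lam_neg (a b : A) : lam a (-b) = -lam a b := (lamHom a).map_neg b

lemma lam_sub (a b c : A) : lam a (b - c) = lam a b - lam a c := (lamHom a).map_sub b c

lemma lam_lam (a b c : A) : lam (a * b) c = lam a (lam b c) := by
  unfold lam
  have h := mul_add_eq a (b * c - b) b
  rw [sub_add_cancel] at h
  rw [mul_assoc, h]; abel

lemma star_eq (a b : A) : star a b = lam a b - b := rfl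

lemma lam_star (a x y : A) : lam a (star x y) = star (a * x * a⁻¹) (lam a y) := by
  have h1 : a * x * a⁻¹ * a = a * x := by group
  rw [star_eq, star_eq, lam_sub, ← lam_lam, ← lam_lam, h1]

lemma star_mem_setStar {K L : Set A} {x y : A} (hx : x ∈ K) (hy : y ∈ L) :
    star x y ∈ setStar K L :=
  AddSubgroup.subset_closure (Set.mem_image2_of_mem hx hy)

lemma lam_mem_setStar {K L : Set A}
    (hK : ∀ a : A, ∀ x ∈ K, a * x * a⁻¹ ∈ K)
    (hL : ∀ a : A, ∀ y ∈ L, lam a y ∈ L)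
    (a : A) {b : A} (hb : b ∈ setStar K L) : lam a b ∈ setStar K L := by
  have hb' : b ∈ AddSubgroup.closure (Set.image2 star K L) := hb
  induction hb' using AddSubgroup.closure_induction with
  | mem x hx =>
    obtain ⟨u, hu, v, hv, rfl⟩ := hx
    rw [lam_star]
    exact star_mem_setStar (hK a u hu) (hL a v hv)
  | zero => rw [lam_zero]; exact zero_mem _
  | add x y hx hy ihx ihy => rw [lam_add]; exact add_mem (ihx hx) (ihy hy)
  | neg x hx ihx => rw [lam_neg]; exact neg_mem (ihx hx)

lemma star_mem_setStar_of {K L : Set A}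
    (hK : ∀ a : A, ∀ x ∈ K, a * x * a⁻¹ ∈ K)
    (hL : ∀ a : A, ∀ y ∈ L, lam a y ∈ L)
    (a : A) {b : A} (hb : b ∈ setStar K L) : star a b ∈ setStar K L := by
  rw [star_eq]
  exact sub_mem (lam_mem_setStar hK hL a hb) hb

lemma isLeftIdeal_of (S : AddSubgroup A)
    (hP : ∀ a : A, ∀ b ∈ S, star a b ∈ S) : IsLeftIdeal (S : Set A) := by
  have h1 : (1 : A) ∈ S := by rw [one_eq_zero]; exact zero_mem S
  refine ⟨⟨zero_mem S, fun x hx y hy => add_mem hx hy, fun x hx => neg_mem hx, h1,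
    fun x hx y hy => ?_, fun x hx => ?_⟩, hP⟩
  · have hxy : x * y = star x y + x + y := by unfold star; abel
    rw [hxy]
    exact add_mem (add_mem (hP x y hy) hx) hy
  · have hinv : x⁻¹ = -(star x⁻¹ x) - x := by
      unfold star
      rw [inv_mul_cancel, one_eq_zero]
      abel
    rw [hinv]
    exact sub_mem (neg_mem (hP x⁻¹ x hx)) hx

lemma mul_lam_inv (a w : A) : a * lam a⁻¹ w = w + a := by
  unfold lam
  have h := mul_add_eq a (a⁻¹ * w - a⁻¹) a⁻¹
  rw [sub_add_cancel, ← mul_assoc, mul_inv_cancel, one_mul, one_eq_zero, add_zero] at h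
  exact (eq_sub_iff_add_eq.mp h).symm

lemma conj_eq (a z : A) : a⁻¹ * z * a = lam a⁻¹ (z * a - a) := by
  have h := mul_lam_inv a (z * a - a)
  rw [sub_add_cancel] at h
  conv_lhs => rw [mul_assoc, ← h]
  rw [← mul_assoc, inv_mul_cancel, one_mul]

lemma conj_mem (S : AddSubgroup A)
    (hP : ∀ a : A, ∀ b ∈ S, star a b ∈ S)
    (hQ : ∀ z ∈ (S : Set A), ∀ a : A, star z a ∈ S) :
    ∀ a : A, ∀ x ∈ S, a * x * a⁻¹ ∈ S := by
  have key : ∀ a : A, ∀ z ∈ S, a⁻¹ * z * a ∈ S := by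
    intro a z hz
    have hy : z * a - a ∈ S := by
      have h : z * a - a = star z a + z := by unfold star; abel
      rw [h]
      exact add_mem (hQ z hz a) hz
    have h5 : lam a⁻¹ (z * a - a) ∈ S := by
      have h6 : lam a⁻¹ (z * a - a) = star a⁻¹ (z * a - a) + (z * a - a) := by
        rw [star_eq]; abel
      rw [h6]
      exact add_mem (hP a⁻¹ _ hy) hy
    rw [conj_eq]
    exact h5
  intro a x hx
  have h := key a⁻¹ x hx
  rwa [inv_inv] at h

lemma leftSeriesOrd_zero : leftSeriesOrd A 0 = ⊤ :=
  Ordinal.limitRecOn_zero _ _ _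

lemma leftSeriesOrd_succ (o : Ordinal) :
    leftSeriesOrd A (Order.succ o) = setStar Set.univ ((leftSeriesOrd A o : AddSubgroup A) : Set A) :=
  Ordinal.limitRecOn_succ _ _ _ _

lemma leftSeriesOrd_limit {o : Ordinal} (ho : Order.IsSuccLimit o) :
    leftSeriesOrd A o = ⨅ (μ : Ordinal) (_ : μ < o), leftSeriesOrd A μ :=
  Ordinal.limitRecOn_limit _ _ _ _ ho

lemma rightSeriesOrd_zero : rightSeriesOrd A 0 = ⊤ :=
  Ordinal.limitRecOn_zero _ _ _

lemma rightSeriesOrd_succ (o : Ordinal) :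
    rightSeriesOrd A (Order.succ o) = setStar ((rightSeriesOrd A o : AddSubgroup A) : Set A) Set.univ :=
  Ordinal.limitRecOn_succ _ _ _ _

lemma rightSeriesOrd_limit {o : Ordinal} (ho : Order.IsSuccLimit o) :
    rightSeriesOrd A o = ⨅ (μ : Ordinal) (_ : μ < o), rightSeriesOrd A μ :=
  Ordinal.limitRecOn_limit _ _ _ _ ho

theorem series_star_closed (α : Ordinal) :
    (∀ a : A, ∀ b ∈ leftSeriesOrd A α, star a b ∈ leftSeriesOrd A α) ∧
    (∀ a : A, ∀ b ∈ rightSeriesOrd A α, star a b ∈ rightSeriesOrd A α) ∧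
    (∀ z ∈ rightSeriesOrd A α, ∀ a : A, star z a ∈ rightSeriesOrd A α) := by
  induction α using Ordinal.limitRecOn with
  | zero =>
    refine ⟨?_, ?_, ?_⟩ <;> intros <;>
      simp [leftSeriesOrd_zero, rightSeriesOrd_zero]
  | add_one o ih =>
    rw [Ordinal.add_one_eq_succ]
    obtain ⟨ihL, ihP, ihQ⟩ := ih
    have hsub : rightSeriesOrd A (Order.succ o) ≤ rightSeriesOrd A o := by
      rw [rightSeriesOrd_succ]
      refine (AddSubgroup.closure_le _).2 ?_
      rintro _ ⟨u, hu, v, -, rfl⟩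
      exact ihQ u hu v
    refine ⟨?_, ?_, ?_⟩
    · intro a b hb
      rw [leftSeriesOrd_succ] at hb ⊢
      refine star_mem_setStar_of (fun _ _ _ => Set.mem_univ _) ?_ a hb
      intro c y hy
      have h : lam c y = star c y + y := by rw [star_eq]; abel
      rw [h]
      exact add_mem (ihL c y hy) hy
    · intro a b hb
      rw [rightSeriesOrd_succ] at hb ⊢
      exact star_mem_setStar_of (conj_mem _ ihP ihQ) (fun _ _ _ => Set.mem_univ _) a hb
    · intro z hz a
      have hz' : z ∈ rightSeriesOrd A o := hsub hz
      rw [rightSeriesOrd_succ]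
      exact star_mem_setStar hz' (Set.mem_univ a)
  | limit o ho ih =>
    simp only [leftSeriesOrd_limit ho, rightSeriesOrd_limit ho, AddSubgroup.mem_iInf]
    refine ⟨fun a b hb μ hμ => (ih μ hμ).1 a b (hb μ hμ),
      fun a b hb μ hμ => (ih μ hμ).2.1 a b (hb μ hμ),
      fun z hz a μ hμ => (ih μ hμ).2.2 z (hz μ hμ) a⟩

lemma isIdeal_of (S : AddSubgroup A)
    (hP : ∀ a : A, ∀ b ∈ S, star a b ∈ S)
    (hQ : ∀ z ∈ (S : Set A), ∀ a : A, star z a ∈ S) : IsIdeal (S : Set A) :=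
  ⟨(isLeftIdeal_of S hP).1, fun a z hz => ⟨hP a z hz, hQ z hz a⟩⟩

end LeftBrace

/-- For every ordinal `α`, the term `A^α` of the left series
of a left brace `A` is a left ideal of `A`, and the term `A^{(α)}` of the
right series is an ideal of `A`. -/
theorem leftSeriesOrd_isLeftIdeal_and_rightSeriesOrd_isIdeal
    {A : Type*} [LeftBrace A] (α : Ordinal) :
    IsLeftIdeal ((leftSeriesOrd A α : AddSubgroup A) : Set A) ∧
    IsIdeal ((rightSeriesOrd A α : AddSubgroup A) : Set A) := by
  obtain ⟨h1, h2, h3⟩ := series_star_closed (A := A) α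
  exact ⟨isLeftIdeal_of _ h1, isIdeal_of _ h2 h3⟩
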